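/- arXiv:2505.22361 — 4 statements merged into one kernel-verified Lean document; each statement's English description precedes it below -/
import Mathlib

section
/- Let {v_t}_{t≥0} and {b_t}_{t≥1} be nonnegative real sequences, and a ≥ 0. If v_0^2 ≤ a and v_t^2 ≤ a + ∑_{i=1}^t b_i v_i for all t ≥ 1, then for every t ≥ 0, a + ∑_{i=1}^t b_i v_i ≤ (√a + ∑_{i=1}^t b_i)^2. -/
theorem stmt_0 (a : ℝ) (v b : ℕ → ℝ) (ha : 0 ≤ a)
    (hv : ∀ t, 0 ≤ v t) (hb : ∀ t, 0 ≤ b t)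
    (h0 : (v 0) ^ 2 ≤ a)
    (h : ∀ t, 1 ≤ t → (v t) ^ 2 ≤ a + ∑ i ∈ Finset.Icc 1 t, b i * v i) :
    ∀ t, a + ∑ i ∈ Finset.Icc 1 t, b i * v i ≤
      (Real.sqrt a + ∑ i ∈ Finset.Icc 1 t, b i) ^ 2 := by
  intro t
  induction t with
  | zero => simp [Real.sq_sqrt ha]
  | succ n ih =>
    rw [Finset.sum_Icc_succ_top (by omega : 1 ≤ n + 1),
        Finset.sum_Icc_succ_top (by omega : 1 ≤ n + 1)]
    set T := Real.sqrt a + ∑ i ∈ Finset.Icc 1 n, b i with hT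
    have hT0 : 0 ≤ T :=
      add_nonneg (Real.sqrt_nonneg a) (Finset.sum_nonneg fun i _ => hb i)
    have hvle : v (n + 1) ≤ b (n + 1) + T := by
      by_contra hc
      push_neg at hc
      have h1 := h (n + 1) (by omega)
      rw [Finset.sum_Icc_succ_top (by omega : 1 ≤ n + 1)] at h1
      nlinarith [hb (n + 1), hv (n + 1)]
    nlinarith [hb (n + 1), hv (n + 1), mul_le_mul_of_nonneg_left hvle (hb (n + 1))]
end

section
/- Let Λ be positive definite and suppose Λ' = Λ + ℓ·φφᵀ with ℓ ≥ 0 satisfies det(Λ') ≤ 2·det(Λ). Then for any vector x, xᵀ Λ^{−1} x ≤ 2·xᵀ (Λ')^{−1} x. -/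
open Matrix

lemma aux_mul_vecMulVec {ν : ℕ} (A : Matrix (Fin ν) (Fin ν) ℝ) (u v : Fin ν → ℝ) :
    A * vecMulVec u v = vecMulVec (A *ᵥ u) v := by
  ext i j
  simp only [Matrix.mul_apply, vecMulVec_apply, Matrix.mulVec, dotProduct,
    Finset.sum_mul]
  exact Finset.sum_congr rfl fun k _ => by ring

lemma aux_vecMulVec_mul {ν : ℕ} (A : Matrix (Fin ν) (Fin ν) ℝ) (u v : Fin ν → ℝ) :
    vecMulVec u v * A = vecMulVec u (Aᵀ *ᵥ v) := by
  ext i j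
  simp only [Matrix.mul_apply, vecMulVec_apply, Matrix.mulVec, dotProduct,
    Finset.mul_sum, Matrix.transpose_apply]
  exact Finset.sum_congr rfl fun k _ => by ring

lemma aux_vecMulVec_mulVec {ν : ℕ} (u v x : Fin ν → ℝ) :
    vecMulVec u v *ᵥ x = (v ⬝ᵥ x) • u := by
  ext i
  simp only [Matrix.mulVec, vecMulVec_apply, dotProduct, Pi.smul_apply,
    smul_eq_mul, Finset.sum_mul]
  exact Finset.sum_congr rfl fun k _ => by ring

lemma aux_smul_vecMulVec {ν : ℕ} (a : ℝ) (u v : Fin ν → ℝ) :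
    a • vecMulVec u v = vecMulVec (a • u) v := by
  ext i j
  simp [vecMulVec_apply, mul_assoc]

lemma aux_psd_nonneg {ν : ℕ} {A : Matrix (Fin ν) (Fin ν) ℝ} (hA : A.PosSemidef)
    (x : Fin ν → ℝ) : 0 ≤ x ⬝ᵥ (A *ᵥ x) := by
  have := hA.re_dotProduct_nonneg x
  simpa using this


lemma aux_det_one_add {ι : Type*} [Unique ι] {ν : ℕ} (A : Matrix (Fin ν) (Fin ν) ℝ)
    (u v : Fin ν → ℝ) : (1 + replicateRow ι v * A * replicateCol ι u).det = 1 + v ⬝ᵥ (A *ᵥ u) := by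
  rw [Matrix.det_unique, Matrix.add_apply, Matrix.one_apply_eq, Matrix.mul_assoc,
    ← Matrix.replicateCol_mulVec, Matrix.replicateRow_mul_replicateCol_apply]

theorem stmt_14 (ν : ℕ) (Λ Λ' : Matrix (Fin ν) (Fin ν) ℝ) (hΛ : Λ.PosDef)
    (φ : Fin ν → ℝ) (ℓ : ℝ) (hℓ : 0 ≤ ℓ)
    (hΛ' : Λ' = Λ + ℓ • Matrix.vecMulVec φ φ)
    (hdet : Λ'.det ≤ 2 * Λ.det) :
    ∀ x : Fin ν → ℝ, x ⬝ᵥ (Λ⁻¹ *ᵥ x) ≤ 2 * (x ⬝ᵥ (Λ'⁻¹ *ᵥ x)) := by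
  intro x
  have hdet0 : Λ.det ≠ 0 := hΛ.det_pos.ne'
  have hAinv : (Λ⁻¹).PosDef := hΛ.inv
  have hAsymm : (Λ⁻¹)ᵀ = Λ⁻¹ := by
    have := hAinv.1
    simpa [Matrix.IsHermitian, Matrix.conjTranspose_eq_transpose_of_trivial] using this
  set w : Fin ν → ℝ := Λ⁻¹ *ᵥ φ with hw
  set c : ℝ := φ ⬝ᵥ w with hc
  set q : ℝ := x ⬝ᵥ (Λ⁻¹ *ᵥ x) with hq
  set s : ℝ := w ⬝ᵥ x with hs
  have hc0 : 0 ≤ c := aux_psd_nonneg hAinv.posSemidef φ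
  have hq0 : 0 ≤ q := aux_psd_nonneg hAinv.posSemidef x
  -- determinant identity
  have hdet' : Λ'.det = Λ.det * (1 + ℓ * c) := by
    rw [hΛ', aux_smul_vecMulVec, Matrix.vecMulVec_eq (Fin 1),
      Matrix.det_add_replicateCol_mul_replicateRow hdet0.isUnit]
    congr 1
    rw [aux_det_one_add, Matrix.mulVec_smul, dotProduct_smul]
    rw [smul_eq_mul, ← hw, ← hc]
  have hlc : ℓ * c ≤ 1 := by
    rw [hdet'] at hdet
    nlinarith [hΛ.det_pos]
  have hden : (0:ℝ) < 1 + ℓ * c := by nlinarith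
  set k : ℝ := ℓ / (1 + ℓ * c) with hk
  have hk0 : 0 ≤ k := div_nonneg hℓ hden.le
  have hkeq : k * (1 + ℓ * c) = ℓ := div_mul_cancel₀ ℓ hden.ne'
  -- Sherman–Morrison : Λ'⁻¹ = Λ⁻¹ - k • w wᵀ
  have hinv : Λ'⁻¹ = Λ⁻¹ - k • vecMulVec w w := by
    apply Matrix.inv_eq_right_inv
    have hΛw : Λ *ᵥ w = φ := by
      rw [hw, Matrix.mulVec_mulVec, Matrix.mul_nonsing_inv _ hdet0.isUnit, Matrix.one_mulVec]
    rw [hΛ']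
    rw [Matrix.add_mul, Matrix.mul_sub, Matrix.mul_sub]
    rw [Matrix.mul_nonsing_inv _ hdet0.isUnit]
    rw [Matrix.mul_smul, aux_mul_vecMulVec, hΛw]
    rw [Matrix.smul_mul, Matrix.smul_mul, aux_vecMulVec_mul, hAsymm, ← hw]
    rw [Matrix.mul_smul, smul_smul]
    have hvw : vecMulVec φ φ * vecMulVec w w = c • vecMulVec φ w := by
      rw [aux_mul_vecMulVec (vecMulVec φ φ) w w, aux_vecMulVec_mulVec, aux_smul_vecMulVec, ← hc]
    rw [hvw, smul_smul]
    have hstep : (1 : Matrix (Fin ν) (Fin ν) ℝ) - k • vecMulVec φ w +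
        (ℓ • vecMulVec φ w - (ℓ * k * c) • vecMulVec φ w) = 1 +
        (ℓ - k - ℓ * k * c) • vecMulVec φ w := by
      rw [sub_smul, sub_smul]
      abel
    rw [hstep]
    have hz : ℓ - k - ℓ * k * c = 0 := by nlinarith [hkeq]
    rw [hz, zero_smul, add_zero]
  -- Cauchy–Schwarz via discriminant
  have hCS : s * s ≤ c * q := by
    have hpoly : ∀ t : ℝ, 0 ≤ c * (t * t) + (2 * s) * t + q := by
      intro t
      have h0 := aux_psd_nonneg hAinv.posSemidef (x + t • φ)
      have hexp : (x + t • φ) ⬝ᵥ (Λ⁻¹ *ᵥ (x + t • φ)) = c * (t * t) + (2 * s) * t + q := by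
        rw [Matrix.mulVec_add, Matrix.mulVec_smul]
        rw [add_dotProduct, smul_dotProduct]
        rw [dotProduct_add, dotProduct_smul, dotProduct_add,
          dotProduct_smul]
        have h1 : x ⬝ᵥ (Λ⁻¹ *ᵥ φ) = s := by
          rw [← hw, hs, dotProduct_comm]
        have h2 : φ ⬝ᵥ (Λ⁻¹ *ᵥ x) = s := by
          rw [hs, hw]
          rw [Matrix.dotProduct_mulVec]
          rw [← Matrix.mulVec_transpose, hAsymm]
        rw [h1, h2]
        simp only [smul_eq_mul]
        ring
      linarith [hexp ▸ h0]
    have hd := discrim_le_zero hpoly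
    rw [discrim] at hd
    nlinarith [hd]
  -- finish
  rw [hinv]
  have hMx : x ⬝ᵥ ((Λ⁻¹ - k • vecMulVec w w) *ᵥ x) = q - k * (s * s) := by
    rw [Matrix.sub_mulVec, dotProduct_sub, Matrix.smul_mulVec,
      dotProduct_smul, aux_vecMulVec_mulVec, dotProduct_smul]
    rw [dotProduct_comm x w]
    simp only [smul_eq_mul, ← hs, ← hq, mul_assoc]
  rw [hMx]
  nlinarith [mul_nonneg hk0 (mul_self_nonneg s), mul_nonneg (mul_nonneg hk0 hc0) hq0, hkeq,
    mul_le_mul_of_nonneg_left hCS hk0]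
end

section
/- (Inexact proximal gradient descent on strongly concave objective) Let f : X → ℝ be σ-strongly concave with M-Lipschitz gradient on convex compact X ⊆ ℝ^d, x* = argmax_{x∈X} f(x), and define f̃(x) = −f(x) − (σ/2)‖x‖². Fix α = 1/M and let x_{τ+1} = argmin_{u ∈ X} { −⟨ĝ_τ, u⟩ + (σ/2)‖u‖² + (1/(2α))‖u − x_τ‖² } where ε_τ = ‖−ĝ_τ − ∇f̃(x_τ)‖_2. With c_τ = (1 + σ/M)^τ, for every t ≥ 1: ∑_{i=1}^t c_{i-1}(f(x*) − f(x_i)) ≤ ( √(1/(2α))·‖x_0 − x*‖_2 + ∑_{i=1}^t √(2α)·c_{i-1}·ε_{i-1}/√(c_i) )². -/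
open RealInnerProductSpace

section helpers

variable {E : Type*} [NormedAddCommGroup E] [InnerProductSpace ℝ E] [CompleteSpace E]

lemma line_deriv_aux (ft : E → ℝ) (hd : Differentiable ℝ ft) (x w : E) (s : ℝ) :
    HasDerivAt (fun t : ℝ => ft (x + t • w)) ⟪gradient ft (x + s • w), w⟫ s := by
  have hline : HasDerivAt (fun t : ℝ => x + t • w) w s := by
    simpa using ((hasDerivAt_id s).smul_const w).const_add x
  simpa [Function.comp_def] using ((hd (x + s • w)).hasGradientAt.hasFDerivAt.comp_hasDerivAt s hline)

lemma conv_grad_aux (f : E → ℝ) (s : Set E) (hconv : ConvexOn ℝ s f)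
    (hd : Differentiable ℝ f) (x u : E) (hx : x ∈ s) (hu : u ∈ s) :
    ⟪gradient f x, u - x⟫ ≤ f u - f x := by
  set w := u - x with hw
  have hder : HasDerivAt (fun t : ℝ => f (x + t • w)) ⟪gradient f x, w⟫ 0 := by
    have := line_deriv_aux f hd x w 0
    simpa using this
  have htend := hasDerivAt_iff_tendsto_slope.mp hder
  have htend' : Filter.Tendsto (slope (fun t : ℝ => f (x + t • w)) 0) (nhdsWithin 0 (Set.Ioi 0))
      (nhds ⟪gradient f x, w⟫) :=
    htend.mono_left (nhdsWithin_mono 0 (fun t ht => by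
      simp only [Set.mem_compl_iff, Set.mem_singleton_iff]
      exact ne_of_gt ht))
  refine le_of_tendsto htend' ?_
  filter_upwards [Ioc_mem_nhdsGT_of_mem (Set.mem_Ico.mpr ⟨le_refl (0:ℝ), one_pos⟩)] with t ht
  obtain ⟨ht0, ht1⟩ := ht
  have hcomb : x + t • w = (1 - t) • x + t • u := by
    rw [hw]; module
  have hcv := hconv.2 hx hu (by linarith : (0:ℝ) ≤ 1 - t) (le_of_lt ht0) (by ring)
  rw [slope_def_field]
  have : f (x + t • w) ≤ (1 - t) * f x + t * f u := by
    rw [hcomb]; simpa [smul_eq_mul] using hcv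
  simp only [sub_zero, zero_smul, add_zero]
  rw [div_le_iff₀ ht0]
  nlinarith

lemma descent_lemma_aux (f : E → ℝ) (hd : Differentiable ℝ f) (M : ℝ)
    (hLip : ∀ a b : E, ‖gradient f a - gradient f b‖ ≤ M * ‖a - b‖) (x y : E) :
    f y ≤ f x + ⟪gradient f x, y - x⟫ + M / 2 * ‖y - x‖ ^ 2 := by
  set w := y - x with hw
  set G : ℝ := ⟪gradient f x, w⟫ with hG
  set q : ℝ → ℝ := fun t => f (x + t • w) - t * G - M / 2 * ‖w‖ ^ 2 * t ^ 2 with hq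
  have hder : ∀ s : ℝ, HasDerivAt q (⟪gradient f (x + s • w), w⟫ - G - M * ‖w‖ ^ 2 * s) s := by
    intro s
    have h1 := line_deriv_aux f hd x w s
    have h2 : HasDerivAt (fun t : ℝ => t * G) G s := by simpa using (hasDerivAt_id s).mul_const G
    have h3 : HasDerivAt (fun t : ℝ => M / 2 * ‖w‖ ^ 2 * t ^ 2) (M / 2 * ‖w‖ ^ 2 * (2 * s)) s := by
      simpa using (hasDerivAt_pow 2 s).const_mul (M / 2 * ‖w‖ ^ 2)
    have := (h1.sub h2).sub h3
    exact HasDerivAt.congr_deriv this (by ring)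
  have hanti : AntitoneOn q (Set.Icc 0 1) := by
    apply antitoneOn_of_deriv_nonpos (convex_Icc 0 1)
    · have : Differentiable ℝ q := fun s => (hder s).differentiableAt
      exact this.continuous.continuousOn
    · intro s _; exact (hder s).differentiableAt.differentiableWithinAt
    · intro s hs
      rw [interior_Icc] at hs
      rw [(hder s).deriv]
      have hcs : ⟪gradient f (x + s • w) - gradient f x, w⟫ ≤ M * s * ‖w‖ ^ 2 := by
        calc ⟪gradient f (x + s • w) - gradient f x, w⟫
            ≤ ‖gradient f (x + s • w) - gradient f x‖ * ‖w‖ := real_inner_le_norm _ _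
          _ ≤ M * ‖(x + s • w) - x‖ * ‖w‖ := by
              have := hLip (x + s • w) x
              nlinarith [norm_nonneg w]
          _ = M * s * ‖w‖ ^ 2 := by
              rw [add_sub_cancel_left, norm_smul]
              simp [abs_of_pos hs.1]; ring
      have heq : ⟪gradient f (x + s • w), w⟫ - G = ⟪gradient f (x + s • w) - gradient f x, w⟫ := by
        rw [inner_sub_left]
      linarith [hcs, heq.ge, heq.le]
  have h01 := hanti (Set.mem_Icc.mpr ⟨le_refl 0, zero_le_one⟩)
    (Set.mem_Icc.mpr ⟨zero_le_one, le_refl 1⟩) zero_le_one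
  simp only [hq, zero_smul, add_zero, one_smul, zero_mul, sub_zero, zero_pow, mul_zero, mul_one,
    one_pow] at h01
  have hxy : x + w = y := by rw [hw]; abel
  rw [hxy] at h01
  linarith

lemma prox_sc_aux (gv xt xp xs : E) (σ A : ℝ) (hσ : 0 < σ) (hA : 0 < A)
    (X : Set E) (hX : Convex ℝ X) (hxp : xp ∈ X) (hxs : xs ∈ X)
    (hmin : ∀ u ∈ X, -⟪gv, xp⟫ + σ/2*‖xp‖^2 + A*‖xp-xt‖^2 ≤
      -⟪gv,u⟫ + σ/2*‖u‖^2 + A*‖u-xt‖^2) :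
    (-⟪gv, xp⟫ + σ/2*‖xp‖^2 + A*‖xp-xt‖^2) + (σ/2+A)*‖xs-xp‖^2 ≤
      -⟪gv,xs⟫ + σ/2*‖xs‖^2 + A*‖xs-xt‖^2 := by
  set w := xs - xp with hw
  set K : ℝ := σ/2 + A with hK
  set L : ℝ := -⟪gv, w⟫ + σ * ⟪xp, w⟫ + 2*A*⟪xp - xt, w⟫ with hL
  have hns : ∀ v : E, ‖v‖^2 = ⟪v,v⟫ := fun v => (real_inner_self_eq_norm_sq v).symm
  have expand : ∀ t : ℝ, -⟪gv, xp + t•w⟫ + σ/2*‖xp + t•w‖^2 + A*‖(xp + t•w)-xt‖^2 =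
      (-⟪gv, xp⟫ + σ/2*‖xp‖^2 + A*‖xp-xt‖^2) + t*L + t^2*K*‖w‖^2 := by
    intro t
    have h1 : (xp + t•w) - xt = (xp - xt) + t•w := by abel
    rw [h1]
    simp only [hns, hL, hK, inner_add_left, inner_add_right, inner_smul_left, inner_smul_right,
      inner_sub_left, inner_sub_right, RCLike.conj_to_real, conj_trivial]
    rw [real_inner_comm w xp, real_inner_comm w xt]
    ring
  clear_value w K L
  have hmem : ∀ t ∈ Set.Ioc (0:ℝ) 1, xp + t • w ∈ X := by
    intro t ht
    have heq : xp + t • w = (1-t) • xp + t • xs := by rw [hw]; module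
    rw [heq]
    exact hX hxp hxs (by linarith [ht.2]) (le_of_lt ht.1) (by ring)
  have hpos : ∀ t ∈ Set.Ioc (0:ℝ) 1, 0 ≤ t*L + t^2*K*‖w‖^2 := by
    intro t ht
    have h2 := hmin _ (hmem t ht)
    rw [expand t] at h2
    linarith
  have hL0 : 0 ≤ L := by
    by_contra hneg
    push_neg at hneg
    by_cases hw0 : ‖w‖ = 0
    · have := hpos 1 (by norm_num)
      rw [hw0] at this; nlinarith
    · have hwpos : 0 < K*‖w‖^2 := by
        have h2 : 0 < ‖w‖ := lt_of_le_of_ne (norm_nonneg w) (Ne.symm hw0)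
        have hKpos : 0 < K := by rw [hK]; linarith
        positivity
      have hquot : 0 < -L/(2*(K*‖w‖^2)) := div_pos (neg_pos.mpr hneg) (by linarith)
      set t0 : ℝ := min 1 (-L/(2*(K*‖w‖^2))) with ht0
      have ht0pos : 0 < t0 := lt_min one_pos hquot
      have ht0le : t0 ≤ 1 := min_le_left _ _
      have hp := hpos t0 ⟨ht0pos, ht0le⟩
      have hle : t0 ≤ -L/(2*(K*‖w‖^2)) := min_le_right _ _
      have h5 : t0 * (K*‖w‖^2) ≤ -L/2 := by
        calc t0 * (K*‖w‖^2) ≤ (-L/(2*(K*‖w‖^2))) * (K*‖w‖^2) :=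
              mul_le_mul_of_nonneg_right hle hwpos.le
          _ = -L/2 := by rw [div_mul_eq_mul_div, mul_comm 2, ← div_div, mul_div_cancel_right₀ _ hwpos.ne']
      have hp' : 0 ≤ t0 * (L + t0*(K*‖w‖^2)) := by nlinarith [hp]
      have h6 : 0 ≤ L + t0*(K*‖w‖^2) := (mul_nonneg_iff_of_pos_left ht0pos).mp hp'
      linarith
  have h1 := expand 1
  have hxs1 : xp + (1:ℝ) • w = xs := by rw [hw]; module
  rw [hxs1] at h1
  rw [h1]
  nlinarith [sq_nonneg ‖w‖]

end helpers

lemma seq_lemma_aux (a : ℝ) (ha : 0 ≤ a) (b v : ℕ → ℝ) (hb : ∀ i, 0 ≤ b i)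
    (t : ℕ) (h : ∀ i, 1 ≤ i → i ≤ t → v i ^ 2 ≤ a + ∑ j ∈ Finset.Icc 1 i, b j * v j) :
    a + ∑ j ∈ Finset.Icc 1 t, b j * v j ≤ (Real.sqrt a + ∑ j ∈ Finset.Icc 1 t, b j) ^ 2 := by
  induction t with
  | zero => simp [Real.sq_sqrt ha]
  | succ n ih =>
    have hW : (0:ℝ) ≤ Real.sqrt a + ∑ j ∈ Finset.Icc 1 n, b j :=
      add_nonneg (Real.sqrt_nonneg a) (Finset.sum_nonneg fun j _ => hb j)
    have ihn := ih (fun i h1 h2 => h i h1 (h2.trans (Nat.le_succ n)))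
    rw [Finset.sum_Icc_succ_top (Nat.le_add_left 1 n), Finset.sum_Icc_succ_top (Nat.le_add_left 1 n)]
    set W := Real.sqrt a + ∑ j ∈ Finset.Icc 1 n, b j with hWdef
    set S := ∑ j ∈ Finset.Icc 1 n, b j * v j with hSdef
    have hvsq := h (n+1) (Nat.le_add_left 1 n) (le_refl _)
    rw [Finset.sum_Icc_succ_top (Nat.le_add_left 1 n)] at hvsq
    have hvle : v (n+1) ≤ W + b (n+1) := by nlinarith [hb (n+1), hW, ihn, hvsq]
    have hre : Real.sqrt a + (∑ j ∈ Finset.Icc 1 n, b j + b (n+1)) = W + b (n+1) := by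
      rw [hWdef]; ring
    rw [hre]
    nlinarith [hb (n+1), hW, ihn]

lemma icc_range_aux (t : ℕ) (F : ℕ → ℝ) :
    ∑ i ∈ Finset.Icc 1 t, F i = ∑ τ ∈ Finset.range t, F (τ+1) := by
  rw [← Finset.Ico_add_one_right_eq_Icc, Finset.sum_Ico_eq_sum_range]
  simp [Nat.add_comm]

theorem stmt_16 (d : ℕ) (σ M α : ℝ) (hσ : 0 < σ) (hM : 0 < M) (hα : α = 1 / M)
    (X : Set (EuclideanSpace ℝ (Fin d))) (hX : Convex ℝ X) (hXc : IsCompact X)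
    (f ftilde : EuclideanSpace ℝ (Fin d) → ℝ) (hf : ContDiff ℝ 2 f)
    (hft : ftilde = fun x => -f x - σ / 2 * ‖x‖ ^ 2)
    (hconv : ConvexOn ℝ X ftilde)
    (hLip : ∀ x y : EuclideanSpace ℝ (Fin d),
      ‖gradient ftilde x - gradient ftilde y‖ ≤ M * ‖x - y‖)
    (xstar : EuclideanSpace ℝ (Fin d)) (hxstar : xstar ∈ X)
    (hopt : ∀ x ∈ X, f x ≤ f xstar)
    (x g : ℕ → EuclideanSpace ℝ (Fin d)) (hxX : ∀ τ, x τ ∈ X)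
    (hmin : ∀ τ, ∀ u ∈ X,
      -⟪g τ, x (τ + 1)⟫ + σ / 2 * ‖x (τ + 1)‖ ^ 2 +
          1 / (2 * α) * ‖x (τ + 1) - x τ‖ ^ 2 ≤
        -⟪g τ, u⟫ + σ / 2 * ‖u‖ ^ 2 + 1 / (2 * α) * ‖u - x τ‖ ^ 2)
    (ε : ℕ → ℝ) (hε : ∀ τ, ε τ = ‖-g τ - gradient ftilde (x τ)‖)
    (c : ℕ → ℝ) (hc : ∀ τ, c τ = (1 + σ / M) ^ τ) :
    ∀ t : ℕ, 1 ≤ t →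
      ∑ i ∈ Finset.Icc 1 t, c (i - 1) * (f xstar - f (x i)) ≤
        (Real.sqrt (1 / (2 * α)) * ‖x 0 - xstar‖ +
          ∑ i ∈ Finset.Icc 1 t,
            Real.sqrt (2 * α) * c (i - 1) * ε (i - 1) / Real.sqrt (c i)) ^ 2 := by
  intro t ht
  have hMne : M ≠ 0 := ne_of_gt hM
  have hMA : 1 / (2 * α) = M / 2 := by rw [hα]; field_simp
  have h2α : 2 * α = (M / 2)⁻¹ := by rw [hα]; field_simp
  simp only [hMA] at hmin
  have hdf : Differentiable ℝ ftilde := by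
    rw [hft]
    exact ((hf.differentiable two_ne_zero).neg).sub
      (((contDiff_norm_sq ℝ : ContDiff ℝ 1 fun x : EuclideanSpace ℝ (Fin d) => ‖x‖ ^ 2).differentiable one_ne_zero).const_mul _)
  have hfe : ∀ u, ftilde u = -f u - σ / 2 * ‖u‖ ^ 2 := fun u => by rw [hft]
  have hρ : 0 < 1 + σ / M := by
    have := div_pos hσ hM; linarith
  have hcpos : ∀ τ, 0 < c τ := fun τ => by rw [hc]; exact pow_pos hρ τ
  have hc0 : c 0 = 1 := by rw [hc]; norm_num
  have hcsucc : ∀ τ, c (τ + 1) = (1 + σ / M) * c τ := fun τ => by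
    rw [hc, hc, pow_succ]; ring
  have hε0 : ∀ τ, 0 ≤ ε τ := fun τ => by rw [hε]; positivity
  have hD0 : ∀ i, 0 ≤ f xstar - f (x i) := fun i => sub_nonneg.mpr (hopt _ (hxX i))
  -- per-step inequality
  have key : ∀ τ : ℕ,
      (f xstar - f (x (τ+1))) + (σ/2 + M/2) * ‖x (τ+1) - xstar‖^2 ≤
        M/2 * ‖x τ - xstar‖^2 + ε τ * ‖x (τ+1) - xstar‖ := by
    intro τ
    set G := gradient ftilde (x τ) with hG
    have hdesc := descent_lemma_aux ftilde hdf M hLip (x τ) (x (τ+1))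
    have hconvi := conv_grad_aux ftilde X hconv hdf (x τ) xstar (hxX τ) hxstar
    rw [← hG] at hdesc hconvi
    have hprox := prox_sc_aux (g τ) (x τ) (x (τ+1)) xstar σ (M/2) hσ (half_pos hM)
      X hX (hxX (τ+1)) hxstar (hmin τ)
    have hεeq : ε τ = ‖g τ + G‖ := by
      rw [hε, ← norm_neg]; congr 1; rw [hG]; abel
    have hCS : ⟪g τ + G, x (τ+1) - xstar⟫ ≤ ε τ * ‖x (τ+1) - xstar‖ := by
      rw [hεeq]
      exact real_inner_le_norm _ _
    have hs1 : ⟪G, x (τ+1) - x τ⟫ = ⟪G, x (τ+1)⟫ - ⟪G, x τ⟫ := inner_sub_right _ _ _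
    have hs2 : ⟪G, xstar - x τ⟫ = ⟪G, xstar⟫ - ⟪G, x τ⟫ := inner_sub_right _ _ _
    have hs3 : ⟪g τ + G, x (τ+1) - xstar⟫ =
        (⟪g τ, x (τ+1)⟫ + ⟪G, x (τ+1)⟫) - (⟪g τ, xstar⟫ + ⟪G, xstar⟫) := by
      rw [inner_sub_right, inner_add_left, inner_add_left]
    have hn1 : ‖xstar - x (τ+1)‖^2 = ‖x (τ+1) - xstar‖^2 := by rw [norm_sub_rev]
    have hn2 : ‖xstar - x τ‖^2 = ‖x τ - xstar‖^2 := by rw [norm_sub_rev]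
    rw [hn1, hn2] at hprox
    linarith [hdesc, hconvi, hprox, hCS, hs1, hs2, hs3,
      (hfe xstar).le, (hfe xstar).ge, (hfe (x (τ+1))).le, (hfe (x (τ+1))).ge]
  have key2 : ∀ τ : ℕ,
      c τ * (f xstar - f (x (τ+1))) +
        (M/2 * c (τ+1) * ‖x (τ+1) - xstar‖^2 - M/2 * c τ * ‖x τ - xstar‖^2) ≤
      c τ * ε τ * ‖x (τ+1) - xstar‖ := by
    intro τ
    have h := mul_le_mul_of_nonneg_left (key τ) (hcpos τ).le
    have hco : M/2 * ((1 + σ/M) * c τ) = (σ/2 + M/2) * c τ := by field_simp; ring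
    rw [hcsucc τ, ← mul_assoc, mul_assoc (M/2), hco]
    nlinarith [h]
  -- summed inequality
  have Ssum : ∀ i : ℕ,
      (∑ τ ∈ Finset.range i, c τ * (f xstar - f (x (τ+1)))) +
        M/2 * c i * ‖x i - xstar‖^2 ≤
      M/2 * ‖x 0 - xstar‖^2 +
        ∑ τ ∈ Finset.range i, c τ * ε τ * ‖x (τ+1) - xstar‖ := by
    intro i
    have h1 := Finset.sum_le_sum (fun τ (_ : τ ∈ Finset.range i) => key2 τ)
    rw [Finset.sum_add_distrib,
      Finset.sum_range_sub (fun n => M/2 * c n * ‖x n - xstar‖^2)] at h1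
    simp only [hc0, mul_one] at h1
    linarith
  -- sequence lemma setup
  set a : ℝ := M/2 * ‖x 0 - xstar‖^2 with ha_def
  set v : ℕ → ℝ := fun i => Real.sqrt (M/2 * c i) * ‖x i - xstar‖ with hv_def
  set b : ℕ → ℝ := fun j => c (j-1) * ε (j-1) / Real.sqrt (M/2 * c j) with hb_def
  have hqpos : ∀ i, 0 < M/2 * c i := fun i => by
    have := hcpos i; positivity
  have hsqrtpos : ∀ i, 0 < Real.sqrt (M/2 * c i) := fun i => Real.sqrt_pos.mpr (hqpos i)
  have hcancel : ∀ (p s r : ℝ), s ≠ 0 → p / s * (s * r) = p * r := by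
    intros p s r hs; field_simp
  have hbv : ∀ τ : ℕ, b (τ+1) * v (τ+1) = c τ * ε τ * ‖x (τ+1) - xstar‖ := by
    intro τ
    simp only [hb_def, hv_def, Nat.add_sub_cancel]
    exact hcancel _ _ _ (hsqrtpos (τ+1)).ne'
  have hvsq : ∀ i, v i ^ 2 = M/2 * c i * ‖x i - xstar‖^2 := by
    intro i
    simp only [hv_def]
    rw [mul_pow, Real.sq_sqrt (hqpos i).le]
  have hseq := seq_lemma_aux a (by positivity) b v
    (fun j => by
      simp only [hb_def]
      have := hcpos (j-1); have := hε0 (j-1); have := hsqrtpos j; positivity)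
    t
    (fun i h1 h2 => by
      rw [hvsq i, icc_range_aux]
      have hS := Ssum i
      have hDsum : 0 ≤ ∑ τ ∈ Finset.range i, c τ * (f xstar - f (x (τ+1))) :=
        Finset.sum_nonneg (fun τ _ => mul_nonneg (hcpos τ).le (hD0 (τ+1)))
      have hsum_eq : ∑ τ ∈ Finset.range i, b (τ+1) * v (τ+1) =
          ∑ τ ∈ Finset.range i, c τ * ε τ * ‖x (τ+1) - xstar‖ :=
        Finset.sum_congr rfl (fun τ _ => hbv τ)
      rw [hsum_eq]
      linarith)
  -- conclude
  have hfinal : ∑ i ∈ Finset.Icc 1 t, c (i - 1) * (f xstar - f (x i)) ≤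
      a + ∑ j ∈ Finset.Icc 1 t, b j * v j := by
    rw [icc_range_aux, icc_range_aux]
    simp only [Nat.add_sub_cancel]
    have hS := Ssum t
    have hsum_eq : ∑ τ ∈ Finset.range t, b (τ+1) * v (τ+1) =
        ∑ τ ∈ Finset.range t, c τ * ε τ * ‖x (τ+1) - xstar‖ :=
      Finset.sum_congr rfl (fun τ _ => hbv τ)
    rw [hsum_eq]
    nlinarith [hqpos t, sq_nonneg ‖x t - xstar‖, mul_nonneg (hqpos t).le (sq_nonneg ‖x t - xstar‖)]
  refine hfinal.trans (hseq.trans (le_of_eq ?_))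
  congr 1
  congr 1
  · rw [ha_def, hMA, Real.sqrt_mul (by positivity : (0:ℝ) ≤ M/2), Real.sqrt_sq (norm_nonneg _)]
  · apply Finset.sum_congr rfl
    intro j _
    simp only [hb_def]
    rw [h2α, Real.sqrt_inv, Real.sqrt_mul (by positivity : (0:ℝ) ≤ M/2)]
    have h1 := hsqrtpos j
    have h2 : (0:ℝ) < Real.sqrt (M/2) := Real.sqrt_pos.mpr (by positivity)
    have h3 : (0:ℝ) < Real.sqrt (c j) := Real.sqrt_pos.mpr (hcpos j)
    field_simp
end

section
/- One-step inexact proximal inequality: under the setting of strongly concave f with f̃(x) = −f(x) − (σ/2)‖x‖² convex and M-Lipschitz-gradient, α = 1/M, x_{τ+1} the proximal update with inexact gradient ĝ_τ and error ε_τ = ‖−ĝ_τ − ∇f̃(x_τ)‖_2, for every x in the feasible set: ((σ + 1/α)/2)·‖x − x_{τ+1}‖² − f(x_{τ+1}) ≤ −f(x) + (1/(2α))‖x − x_τ‖² + ε_τ·‖x − x_{τ+1}‖. -/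
open RealInnerProductSpace Topology Filter

section Aux

variable {E : Type*} [NormedAddCommGroup E] [InnerProductSpace ℝ E]

lemma quad_comb (a b : E) (t : ℝ) :
    ‖a + t • (b - a)‖ ^ 2 = (1 - t) * ‖a‖ ^ 2 + t * ‖b‖ ^ 2 - t * (1 - t) * ‖b - a‖ ^ 2 := by
  have h1 : ∀ v : E, ‖v‖ ^ 2 = ⟪v, v⟫ := fun v => (real_inner_self_eq_norm_sq v).symm
  simp only [h1, inner_add_add_self, inner_sub_sub_self, real_inner_smul_left,
    real_inner_smul_right, inner_sub_left, inner_sub_right, real_inner_comm a b]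
  ring

lemma line_hasDerivAt [CompleteSpace E] {f : E → ℝ} (hdiff : Differentiable ℝ f) (z v : E) (t : ℝ) :
    HasDerivAt (fun s : ℝ => f (z + s • v)) ⟪gradient f (z + t • v), v⟫ t := by
  have h1 : HasGradientAt f (gradient f (z + t • v)) (z + t • v) :=
    (hdiff (z + t • v)).hasGradientAt
  have h2 := h1.hasFDerivAt
  have h3 : HasDerivAt (fun s : ℝ => z + s • v) v t := by
    simpa using ((hasDerivAt_id t).smul_const v).const_add z
  have h4 := h2.comp_hasDerivAt t h3
  exact h4

end Aux

section Aux2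

variable {E : Type*} [NormedAddCommGroup E] [InnerProductSpace ℝ E] [CompleteSpace E]

lemma descent_lemma {f : E → ℝ} {M : ℝ} (hM : 0 < M) (hdiff : Differentiable ℝ f)
    (hLip : ∀ x y : E, ‖gradient f x - gradient f y‖ ≤ M * ‖x - y‖) (z y : E) :
    f y ≤ f z + ⟪gradient f z, y - z⟫ + M / 2 * ‖y - z‖ ^ 2 := by
  set v := y - z with hv
  have hcontG : Continuous fun t : ℝ => gradient f (z + t • v) := by
    have : LipschitzWith (M * ‖v‖).toNNReal fun t : ℝ => gradient f (z + t • v) := by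
      apply LipschitzWith.of_dist_le_mul
      intro s t
      rw [dist_eq_norm, Real.dist_eq]
      calc ‖gradient f (z + s • v) - gradient f (z + t • v)‖
          ≤ M * ‖(z + s • v) - (z + t • v)‖ := hLip _ _
        _ = M * ‖v‖ * |s - t| := by
            rw [show (z + s • v) - (z + t • v) = (s - t) • v by rw [sub_smul]; abel,
              norm_smul, Real.norm_eq_abs]
            ring
        _ ≤ (M * ‖v‖).toNNReal * |s - t| := by
            gcongr
            exact Real.le_coe_toNNReal _
    exact this.continuous
  have hcont : Continuous fun t : ℝ => ⟪gradient f (z + t • v), v⟫ :=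
    hcontG.inner continuous_const
  have hint : ∀ t ∈ Set.uIcc (0:ℝ) 1,
      HasDerivAt (fun s : ℝ => f (z + s • v)) ⟪gradient f (z + t • v), v⟫ t :=
    fun t _ => line_hasDerivAt hdiff z v t
  have hii : IntervalIntegrable (fun t : ℝ => ⟪gradient f (z + t • v), v⟫)
      MeasureTheory.volume 0 1 := hcont.intervalIntegrable 0 1
  have heq := intervalIntegral.integral_eq_sub_of_hasDerivAt hint hii
  have hii2 : IntervalIntegrable
      (fun t : ℝ => ⟪gradient f z, v⟫ + M * ‖v‖ ^ 2 * t) MeasureTheory.volume 0 1 :=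
    (continuous_const.add (continuous_const.mul continuous_id)).intervalIntegrable 0 1
  have hbound : (∫ t in (0:ℝ)..1, ⟪gradient f (z + t • v), v⟫) ≤
      ∫ t in (0:ℝ)..1, (⟪gradient f z, v⟫ + M * ‖v‖ ^ 2 * t) := by
    apply intervalIntegral.integral_mono_on zero_le_one hii hii2
    intro t ht
    have h1 : ⟪gradient f (z + t • v), v⟫ - ⟪gradient f z, v⟫
        = ⟪gradient f (z + t • v) - gradient f z, v⟫ := by
      rw [inner_sub_left]
    have h2 : ⟪gradient f (z + t • v) - gradient f z, v⟫ ≤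
        ‖gradient f (z + t • v) - gradient f z‖ * ‖v‖ := real_inner_le_norm _ _
    have h3 : ‖gradient f (z + t • v) - gradient f z‖ ≤ M * (t * ‖v‖) := by
      have := hLip (z + t • v) z
      simpa [norm_smul, abs_of_nonneg ht.1] using this
    nlinarith [norm_nonneg v, ht.1]
  have hrhs : (∫ t in (0:ℝ)..1, (⟪gradient f z, v⟫ + M * ‖v‖ ^ 2 * t))
      = ⟪gradient f z, v⟫ + M / 2 * ‖v‖ ^ 2 := by
    rw [intervalIntegral.integral_add (f := fun _ => ⟪gradient f z, v⟫) (g := fun t : ℝ => M * ‖v‖ ^ 2 * t) (intervalIntegrable_const)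
      ((continuous_const.mul continuous_id').intervalIntegrable 0 1),
      intervalIntegral.integral_const, intervalIntegral.integral_const_mul,
      integral_id]
    simp; ring
  have h01 : z + (1:ℝ) • v = y := by simp [hv]
  have h00 : z + (0:ℝ) • v = z := by simp
  rw [h01, h00] at heq
  linarith [heq, hbound, hrhs.le, hrhs.ge]

lemma subgrad_ineq {f : E → ℝ} {X : Set E} (hconv : ConvexOn ℝ X f)
    (hdiff : Differentiable ℝ f) {z x : E} (hz : z ∈ X) (hx : x ∈ X) :
    f z + ⟪gradient f z, x - z⟫ ≤ f x := by
  set v := x - z with hv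
  have hder := line_hasDerivAt hdiff z v 0
  have h00 : z + (0:ℝ) • v = z := by simp
  rw [h00] at hder
  rw [hasDerivAt_iff_tendsto_slope] at hder
  have hmono : 𝓝[>] (0:ℝ) ≤ 𝓝[≠] (0:ℝ) :=
    nhdsWithin_mono _ (fun t ht => ne_of_gt ht)
  have hten := hder.mono_left hmono
  have hev : ∀ᶠ t in 𝓝[>] (0:ℝ),
      slope (fun s : ℝ => f (z + s • v)) 0 t ≤ f x - f z := by
    filter_upwards [Ioc_mem_nhdsGT one_pos] with t ht
    have hcomb : z + t • v = (1 - t) • z + t • x := by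
      rw [hv]; module
    have hcc := hconv.2 hz hx (by linarith [ht.2] : (0:ℝ) ≤ 1 - t) ht.1.le (by ring)
    rw [← hcomb] at hcc
    have hslope : slope (fun s : ℝ => f (z + s • v)) 0 t
        = (f (z + t • v) - f z) / t := by
      rw [slope_def_field]; simp [h00]
    rw [hslope, div_le_iff₀ ht.1]
    simp only [smul_eq_mul] at hcc
    nlinarith [hcc]
  have := le_of_tendsto hten hev
  linarith [this]

end Aux2

set_option maxHeartbeats 1000000 in
theorem stmt_17 (d : ℕ) (σ M α : ℝ) (hσ : 0 < σ) (hM : 0 < M) (hα : α = 1 / M)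
    (X : Set (EuclideanSpace ℝ (Fin d))) (hX : Convex ℝ X) (hXc : IsCompact X)
    (f ftilde : EuclideanSpace ℝ (Fin d) → ℝ) (hf : ContDiff ℝ 2 f)
    (hft : ftilde = fun x => -f x - σ / 2 * ‖x‖ ^ 2)
    (hconv : ConvexOn ℝ X ftilde)
    (hLip : ∀ x y : EuclideanSpace ℝ (Fin d),
      ‖gradient ftilde x - gradient ftilde y‖ ≤ M * ‖x - y‖)
    (g xτ xnext : EuclideanSpace ℝ (Fin d)) (hxτ : xτ ∈ X) (hxnext : xnext ∈ X)
    (hmin : ∀ u ∈ X,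
      -⟪g, xnext⟫ + σ / 2 * ‖xnext‖ ^ 2 + 1 / (2 * α) * ‖xnext - xτ‖ ^ 2 ≤
        -⟪g, u⟫ + σ / 2 * ‖u‖ ^ 2 + 1 / (2 * α) * ‖u - xτ‖ ^ 2)
    (ε : ℝ) (hε : ε = ‖-g - gradient ftilde xτ‖) :
    ∀ x ∈ X,
      (σ + 1 / α) / 2 * ‖x - xnext‖ ^ 2 - f xnext ≤
        -f x + 1 / (2 * α) * ‖x - xτ‖ ^ 2 + ε * ‖x - xnext‖ := by
  intro x hx
  have hαM : 1 / α = M := by rw [hα]; field_simp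
  have hα2 : 1 / (2 * α) = M / 2 := by rw [hα]; field_simp
  rw [hα2] at hmin ⊢
  rw [hαM]
  -- differentiability
  have hdiff : Differentiable ℝ ftilde := by
    rw [hft]
    exact ((hf.differentiable two_ne_zero).neg).sub
      (((contDiff_norm_sq ℝ (n := 1)).differentiable one_ne_zero).const_mul (σ / 2))
  -- Claim A : strong minimality
  have hA : σ/2*‖xnext‖^2 + M/2*‖xnext - xτ‖^2 - ⟪g, xnext⟫ + (σ+M)/2*‖x - xnext‖^2
      ≤ σ/2*‖x‖^2 + M/2*‖x - xτ‖^2 - ⟪g, x⟫ := by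
    by_contra hcon
    push_neg at hcon
    set D := ‖x - xnext‖^2 with hD
    set c := (σ/2*‖x‖^2 + M/2*‖x - xτ‖^2 - ⟪g, x⟫)
      - (σ/2*‖xnext‖^2 + M/2*‖xnext - xτ‖^2 - ⟪g, xnext⟫) with hc
    clear_value D c
    have hkey : ∀ t : ℝ, 0 < t → t < 1 → (σ+M)*(1-t)/2*D ≤ c := by
      intro t ht0 ht1
      have hcomb : xnext + t • (x - xnext) = (1-t) • xnext + t • x := by module
      have hu : xnext + t • (x - xnext) ∈ X := by
        rw [hcomb]
        exact hX hxnext hx (by linarith) ht0.le (by ring)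
      have hm := hmin _ hu
      have e1 : ‖xnext + t • (x - xnext)‖^2
          = (1-t)*‖xnext‖^2 + t*‖x‖^2 - t*(1-t)*D := by rw [hD]; exact quad_comb xnext x t
      have e2 : ‖(xnext + t • (x - xnext)) - xτ‖^2
          = (1-t)*‖xnext - xτ‖^2 + t*‖x - xτ‖^2 - t*(1-t)*D := by
        have h := quad_comb (xnext - xτ) (x - xτ) t
        have hr1 : (xnext - xτ) + t • ((x - xτ) - (xnext - xτ))
            = (xnext + t • (x - xnext)) - xτ := by module
        have hr2 : (x - xτ) - (xnext - xτ) = x - xnext := by module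
        rw [hr1, hr2] at h
        rw [hD]
        exact h
      have e3 : ⟪g, xnext + t • (x - xnext)⟫
          = (1-t)*⟪g, xnext⟫ + t*⟪g, x⟫ := by
        rw [inner_add_right, real_inner_smul_right, inner_sub_right]; ring
      rw [e1, e2, e3] at hm
      nlinarith [hm, ht0, mul_pos ht0 ht0]
    have hc0 : 0 ≤ c := by have := hmin x hx; rw [hc]; linarith
    have hD0 : 0 < D := by
      rcases lt_or_eq_of_le (show (0:ℝ) ≤ D by rw [hD]; positivity) with h | h
      · exact h
      · exfalso; rw [← h] at hcon; rw [hc] at hc0; linarith [hc0, hcon]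
    set t := ((σ+M)/2*D - c)/((σ+M)*D) with ht
    have hκD : 0 < (σ+M)*D := by positivity
    have ht0 : 0 < t := div_pos (by linarith) hκD
    have ht1 : t < 1 := by
      rw [ht, div_lt_one hκD]; linarith [hκD, hc0]
    have heqt : t*((σ+M)*D) = (σ+M)/2*D - c := by
      rw [ht]; field_simp
    have := hkey t ht0 ht1
    nlinarith [this, heqt]
  -- Claim B : descent lemma
  have hB := descent_lemma hM hdiff hLip xτ xnext
  -- Claim C : subgradient inequality
  have hC := subgrad_ineq hconv hdiff hxτ hx
  -- Cauchy–Schwarz on the gradient error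
  have hCS : ⟪gradient ftilde xτ, xnext - x⟫ + ⟪g, xnext - x⟫
      ≤ ‖-g - gradient ftilde xτ‖ * ‖x - xnext‖ := by
    have h1 : ⟪gradient ftilde xτ, xnext - x⟫ + ⟪g, xnext - x⟫
        = ⟪-g - gradient ftilde xτ, x - xnext⟫ := by
      simp only [inner_sub_left, inner_sub_right, inner_neg_left]
      ring
    rw [h1]
    exact real_inner_le_norm _ _
  -- inner product linearity facts
  have hlin1 : ⟪gradient ftilde xτ, xnext - xτ⟫ - ⟪gradient ftilde xτ, x - xτ⟫
      = ⟪gradient ftilde xτ, xnext - x⟫ := by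
    rw [← inner_sub_right]; congr 1; abel
  have hlin2 : ⟪g, xnext⟫ - ⟪g, x⟫ = ⟪g, xnext - x⟫ := (inner_sub_right g xnext x).symm
  -- relate f and ftilde
  have hfx : -f x = ftilde x + σ/2*‖x‖^2 := by rw [hft]; ring
  have hfn : -f xnext = ftilde xnext + σ/2*‖xnext‖^2 := by rw [hft]; ring
  rw [hε]
  linarith [hA, hB, hC, hCS, hlin1, hlin2, hfx, hfn]
end
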